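/- Let G be a connected bipartite graph with bipartition U ∪ V, |U| ≤ |V|. Then G is equimatchable if and only if every maximal matching of G saturates all vertices of U. -/

import Mathlib

/-- `F` is an edge dominating set of `G`: every edge of `G` is in `F` or shares a
vertex with an edge of `F` (edges of `F` themselves share a vertex with themselves). -/
def IsEDS {V : Type*} (G : SimpleGraph V) (F : Finset (Sym2 V)) : Prop :=
  ↑F ⊆ G.edgeSet ∧ ∀ e ∈ G.edgeSet, ∃ f ∈ F, ∃ v : V, v ∈ e ∧ v ∈ f

/-- `F` is a minimal edge dominating set of `G`. -/
def IsMinEDS {V : Type*} (G : SimpleGraph V) (F : Finset (Sym2 V)) : Prop :=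
  IsEDS G F ∧ ∀ F' ⊂ F, ¬ IsEDS G F'

/-- `G` is well-edge-dominated: all minimal edge dominating sets have the same size. -/
def WellEdgeDominated {V : Type*} (G : SimpleGraph V) : Prop :=
  ∀ F₁ F₂ : Finset (Sym2 V), IsMinEDS G F₁ → IsMinEDS G F₂ → F₁.card = F₂.card

/-- `M` is a matching of `G`: a set of pairwise vertex-disjoint edges. -/
def IsMatchingSet {V : Type*} (G : SimpleGraph V) (M : Finset (Sym2 V)) : Prop :=
  ↑M ⊆ G.edgeSet ∧ ∀ e ∈ M, ∀ f ∈ M, e ≠ f → ∀ v : V, ¬ (v ∈ e ∧ v ∈ f)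

/-- `M` is a maximal matching of `G`: a matching such that every edge of `G`
shares a vertex with an edge of `M` (so no edge can be added). -/
def IsMaximalMatching {V : Type*} (G : SimpleGraph V) (M : Finset (Sym2 V)) : Prop :=
  IsMatchingSet G M ∧ ∀ e ∈ G.edgeSet, ∃ f ∈ M, ∃ v : V, v ∈ e ∧ v ∈ f

/-- `G` is equimatchable: all maximal matchings have the same size. -/
def Equimatchable {V : Type*} (G : SimpleGraph V) : Prop :=
  ∀ M₁ M₂ : Finset (Sym2 V), IsMaximalMatching G M₁ → IsMaximalMatching G M₂ →
    M₁.card = M₂.card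



namespace EqmSat

/-- `v` is saturated (covered) by the edge set `M`. -/
def Sat {W : Type*} (M : Finset (Sym2 W)) (v : W) : Prop := ∃ e ∈ M, v ∈ e

instance {W : Type*} [DecidableEq W] (M : Finset (Sym2 W)) : DecidablePred (Sat M) := by
  intro v; unfold Sat; infer_instance

section Basic
variable {W : Type*} [DecidableEq W] {G : SimpleGraph W} {M : Finset (Sym2 W)}

lemma sym2_rep (e : Sym2 W) : ∃ a b, e = s(a,b) := by
  induction e with
  | h a b => exact ⟨a, b, rfl⟩

lemma edge_unique (hM : IsMatchingSet G M) {e f : Sym2 W} (he : e ∈ M) (hf : f ∈ M)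
    {v : W} (hv : v ∈ e) (hv' : v ∈ f) : e = f := by
  by_contra h; exact hM.2 e he f hf h v ⟨hv, hv'⟩

lemma partner_unique (hM : IsMatchingSet G M) {t q q' : W}
    (h1 : s(t, q) ∈ M) (h2 : s(t, q') ∈ M) : q = q' := by
  have h := edge_unique hM h1 h2 (Sym2.mem_mk_left t q) (Sym2.mem_mk_left t q')
  exact (Sym2.congr_right).1 h

/-- The set of vertices covered by `M`. -/
def cov {W : Type*} [Fintype W] [DecidableEq W] (M : Finset (Sym2 W)) : Finset W :=
  Finset.univ.filter (fun v => Sat M v)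

end Basic

section Cov
variable {W : Type*} [Fintype W] [DecidableEq W] {G : SimpleGraph W} {M : Finset (Sym2 W)}

@[simp] lemma mem_cov {v : W} : v ∈ cov M ↔ Sat M v := by
  simp [cov]

lemma cov_card (hM : IsMatchingSet G M) : (cov M).card = 2 * M.card := by
  classical
  have h1 : cov M = M.biUnion (fun e => Finset.univ.filter (· ∈ e)) := by
    ext v; rw [mem_cov]; simp [Sat]
  rw [h1, Finset.card_biUnion]
  · have h2 : ∀ e ∈ M, (Finset.univ.filter (· ∈ e)).card = 2 := by
      intro e he
      have hedge : e ∈ G.edgeSet := hM.1 he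
      induction e with
      | h a b =>
        have hab : a ≠ b := by
          intro h; subst h; exact G.irrefl (G.mem_edgeSet.1 hedge)
        have heq : (Finset.univ.filter (· ∈ s(a,b))) = {a, b} := by
          ext x; simp [Sym2.mem_iff]
        rw [heq, Finset.card_insert_of_notMem (by simp [hab]), Finset.card_singleton]
    rw [Finset.sum_congr rfl h2, Finset.sum_const, smul_eq_mul, Nat.mul_comm]
  · intro e he f hf hef
    rw [Function.onFun, Finset.disjoint_filter]
    intro x _ hxe hxf
    exact hM.2 e he f hf hef x ⟨hxe, hxf⟩

end Cov

variable {W : Type*} {G : SimpleGraph W} {M : Finset (Sym2 W)}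

lemma exists_partner {M : Finset (Sym2 W)} {v : W} (h : Sat M v) : ∃ w, s(v, w) ∈ M := by
  obtain ⟨e, he, hv⟩ := h
  induction e with
  | h a b =>
    rcases Sym2.mem_iff.1 hv with rfl | rfl
    · exact ⟨b, he⟩
    · exact ⟨a, Sym2.eq_swap ▸ he⟩

lemma mem_es (hM : IsMatchingSet G M) {e : Sym2 W} (he : e ∈ M) : e ∈ G.edgeSet := hM.1 he

lemma adj_of_mem (hM : IsMatchingSet G M) {a b : W} (he : s(a,b) ∈ M) : G.Adj a b :=
  G.mem_edgeSet.1 (mem_es hM he)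

lemma partner_unique' (hM : IsMatchingSet G M) {t q q' : W}
    (h1 : s(t, q) ∈ M) (h2 : s(t, q') ∈ M) : q = q' := by
  by_cases h : s(t,q) = s(t,q')
  · exact (Sym2.congr_right).1 h
  · exact absurd ⟨Sym2.mem_mk_left t q, Sym2.mem_mk_left t q'⟩ (hM.2 _ h1 _ h2 h t)



inductive Alt {W : Type*} (M N : Finset (Sym2 W)) (U V : Finset W) : Bool → W → List W → Prop
  | stopA {v} : v ∈ U → ¬ Sat M v → Alt M N U V true v [v]
  | stepA {v w L} : v ∈ U → s(v, w) ∈ M → Alt M N U V false w L → Alt M N U V true v (v :: L)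
  | stopB {v} : v ∈ V → ¬ Sat N v → Alt M N U V false v [v]
  | stepB {v w L} : v ∈ V → s(v, w) ∈ N → Alt M N U V true w L → Alt M N U V false v (v :: L)

def meList {W : Type*} : Bool → List W → List (Sym2 W)
  | true, v :: w :: L => s(v, w) :: meList false (w :: L)
  | false, _ :: w :: L => meList true (w :: L)
  | _, _ => []

def neList {W : Type*} (b : Bool) (L : List W) : List (Sym2 W) := meList (!b) L

variable {W : Type*} {M N : Finset (Sym2 W)} {U V : Finset W} {b : Bool} {v : W} {L : List W}

lemma meList_tt (v w : W) (L : List W) :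
    meList true (v :: w :: L) = s(v, w) :: meList false (w :: L) := rfl
lemma meList_ff (v w : W) (L : List W) :
    meList false (v :: w :: L) = meList true (w :: L) := rfl
lemma neList_tt (v w : W) (L : List W) :
    neList true (v :: w :: L) = neList false (w :: L) := rfl
lemma neList_ff (v w : W) (L : List W) :
    neList false (v :: w :: L) = s(v, w) :: neList true (w :: L) := rfl

namespace Alt

lemma head_shape (h : Alt M N U V b v L) : ∃ L', L = v :: L' := by
  cases h <;> exact ⟨_, rfl⟩

/-- which chain edges are `M`-type: every `M`-edge at a chain vertex is a chain `M`-edge,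
except possibly at the head of a `false`-flagged chain. -/
lemma edgesM (hu : ∀ {e f : Sym2 W}, e ∈ M → f ∈ M → ∀ {x : W}, x ∈ e → x ∈ f → e = f)
    (h : Alt M N U V b v L) :
    ∀ x ∈ L, ∀ e ∈ M, x ∈ e → e ∈ meList b L ∨ (b = false ∧ x = v) := by
  induction h with
  | stopA hvU hv =>
    intro x hx e he hxe
    rw [List.mem_singleton] at hx; subst hx
    exact absurd ⟨e, he, hxe⟩ hv
  | @stepA v w L' hvU hvw hsub ih =>
    obtain ⟨L'', rfl⟩ := hsub.head_shape
    intro x hx e he hxe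
    rcases List.mem_cons.1 hx with rfl | hx'
    · have : e = s(x, w) := hu he hvw hxe (Sym2.mem_mk_left x w)
      left; rw [meList_tt, this]; exact List.mem_cons_self
    · rcases ih x hx' e he hxe with h1 | ⟨_, rfl⟩
      · left; rw [meList_tt]; exact List.mem_cons_of_mem _ h1
      · have : e = s(v, x) := hu he hvw hxe (Sym2.mem_mk_right v x)
        left; rw [meList_tt, this]; exact List.mem_cons_self
  | stopB hvV hv =>
    intro x hx e he hxe
    rw [List.mem_singleton] at hx; subst hx
    exact Or.inr ⟨rfl, rfl⟩
  | @stepB v w L' hvV hvw hsub ih =>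
    obtain ⟨L'', rfl⟩ := hsub.head_shape
    intro x hx e he hxe
    rcases List.mem_cons.1 hx with rfl | hx'
    · exact Or.inr ⟨rfl, rfl⟩
    · rcases ih x hx' e he hxe with h1 | ⟨h2, _⟩
      · left; rw [meList_ff]; exact h1
      · exact absurd h2 (by simp)

end Alt



variable {W : Type*} {M N : Finset (Sym2 W)} {U V : Finset W} {b : Bool} {v z : W} {L : List W}
namespace Alt

lemma edgesN (hu : ∀ {e f : Sym2 W}, e ∈ N → f ∈ N → ∀ {x : W}, x ∈ e → x ∈ f → e = f)
    (h : Alt M N U V b v L) :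
    ∀ x ∈ L, ∀ e ∈ N, x ∈ e → e ∈ neList b L ∨ (b = true ∧ x = v) := by
  induction h with
  | stopA hvU hv =>
    intro x hx e he hxe
    rw [List.mem_singleton] at hx; subst hx
    exact Or.inr ⟨rfl, rfl⟩
  | @stepA v w L' hvU hvw hsub ih =>
    obtain ⟨L'', rfl⟩ := hsub.head_shape
    intro x hx e he hxe
    rcases List.mem_cons.1 hx with rfl | hx'
    · exact Or.inr ⟨rfl, rfl⟩
    · rcases ih x hx' e he hxe with h1 | ⟨h2, _⟩
      · left; rw [neList_tt]; exact h1
      · exact absurd h2 (by simp)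
  | stopB hvV hv =>
    intro x hx e he hxe
    rw [List.mem_singleton] at hx; subst hx
    exact absurd ⟨e, he, hxe⟩ hv
  | @stepB v w L' hvV hvw hsub ih =>
    obtain ⟨L'', rfl⟩ := hsub.head_shape
    intro x hx e he hxe
    rcases List.mem_cons.1 hx with rfl | hx'
    · have : e = s(x, w) := hu he hvw hxe (Sym2.mem_mk_left x w)
      left; rw [neList_ff, this]; exact List.mem_cons_self
    · rcases ih x hx' e he hxe with h1 | ⟨_, rfl⟩
      · left; rw [neList_ff]; exact List.mem_cons_of_mem _ h1
      · have : e = s(v, x) := hu he hvw hxe (Sym2.mem_mk_right v x)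
        left; rw [neList_ff, this]; exact List.mem_cons_self

lemma meList_sub (h : Alt M N U V b v L) : ∀ e ∈ meList b L, e ∈ M := by
  induction h with
  | stopA hvU hv => simp [meList]
  | @stepA v w L' hvU hvw hsub ih =>
    obtain ⟨L'', rfl⟩ := hsub.head_shape
    intro e he
    rcases List.mem_cons.1 (by rwa [meList_tt] at he) with rfl | he'
    · exact hvw
    · exact ih e he'
  | stopB hvV hv => simp [meList]
  | @stepB v w L' hvV hvw hsub ih =>
    obtain ⟨L'', rfl⟩ := hsub.head_shape
    intro e he
    exact ih e (by rwa [meList_ff] at he)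

lemma neList_sub (h : Alt M N U V b v L) : ∀ e ∈ neList b L, e ∈ N := by
  induction h with
  | stopA hvU hv => simp [neList, meList]
  | @stepA v w L' hvU hvw hsub ih =>
    obtain ⟨L'', rfl⟩ := hsub.head_shape
    intro e he
    exact ih e (by rwa [neList_tt] at he)
  | stopB hvV hv => simp [neList, meList]
  | @stepB v w L' hvV hvw hsub ih =>
    obtain ⟨L'', rfl⟩ := hsub.head_shape
    intro e he
    rcases List.mem_cons.1 (by rwa [neList_ff] at he) with rfl | he'
    · exact hvw
    · exact ih e he'

lemma covM_of_lastN (h : Alt M N U V b v L) :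
    ∀ z, L.getLast? = some z → ¬ Sat N z →
    ∀ x ∈ L, (∃ e ∈ meList b L, x ∈ e) ∨ (b = false ∧ x = v) ∨ (b = true ∧ L = [v]) := by
  induction h with
  | stopA hvU hv =>
    intro z hz hzN x hx
    rw [List.mem_singleton] at hx; subst hx
    exact Or.inr (Or.inr ⟨rfl, rfl⟩)
  | @stepA v w L' hvU hvw hsub ih =>
    obtain ⟨L'', rfl⟩ := hsub.head_shape
    intro z hz hzN x hx
    rw [List.getLast?_cons_cons] at hz
    rcases List.mem_cons.1 hx with rfl | hx'
    · exact Or.inl ⟨s(x, w), by rw [meList_tt]; exact List.mem_cons_self,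
        Sym2.mem_mk_left x w⟩
    · rcases ih z hz hzN x hx' with ⟨e, he, hxe⟩ | ⟨_, rfl⟩ | ⟨h2, _⟩
      · exact Or.inl ⟨e, by rw [meList_tt]; exact List.mem_cons_of_mem _ he, hxe⟩
      · exact Or.inl ⟨s(v, x), by rw [meList_tt]; exact List.mem_cons_self,
          Sym2.mem_mk_right v x⟩
      · exact absurd h2 (by simp)
  | stopB hvV hv =>
    intro z hz hzN x hx
    rw [List.mem_singleton] at hx; subst hx
    exact Or.inr (Or.inl ⟨rfl, rfl⟩)
  | @stepB v w L' hvV hvw hsub ih =>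
    obtain ⟨L'', rfl⟩ := hsub.head_shape
    intro z hz hzN x hx
    rw [List.getLast?_cons_cons] at hz
    rcases List.mem_cons.1 hx with rfl | hx'
    · exact Or.inr (Or.inl ⟨rfl, rfl⟩)
    · rcases ih z hz hzN x hx' with ⟨e, he, hxe⟩ | ⟨h2, _⟩ | ⟨_, h3⟩
      · exact Or.inl ⟨e, by rw [meList_ff]; exact he, hxe⟩
      · exact absurd h2 (by simp)
      · rw [h3] at hz
        simp only [List.getLast?_singleton, Option.some.injEq] at hz
        exact absurd ⟨s(v, w), hvw, Sym2.mem_mk_right v w⟩ (hz ▸ hzN)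

lemma covN_of_lastM (h : Alt M N U V b v L) :
    ∀ z, L.getLast? = some z → ¬ Sat M z →
    ∀ x ∈ L, (∃ e ∈ neList b L, x ∈ e) ∨ (b = true ∧ x = v) ∨ (b = false ∧ L = [v]) := by
  induction h with
  | stopA hvU hv =>
    intro z hz hzM x hx
    rw [List.mem_singleton] at hx; subst hx
    exact Or.inr (Or.inl ⟨rfl, rfl⟩)
  | @stepA v w L' hvU hvw hsub ih =>
    obtain ⟨L'', rfl⟩ := hsub.head_shape
    intro z hz hzM x hx
    rw [List.getLast?_cons_cons] at hz
    rcases List.mem_cons.1 hx with rfl | hx'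
    · exact Or.inr (Or.inl ⟨rfl, rfl⟩)
    · rcases ih z hz hzM x hx' with ⟨e, he, hxe⟩ | ⟨h2, _⟩ | ⟨_, h3⟩
      · exact Or.inl ⟨e, by rw [neList_tt]; exact he, hxe⟩
      · exact absurd h2 (by simp)
      · rw [h3] at hz
        simp only [List.getLast?_singleton, Option.some.injEq] at hz
        exact absurd ⟨s(v, w), hvw, Sym2.mem_mk_right v w⟩ (hz ▸ hzM)
  | stopB hvV hv =>
    intro z hz hzM x hx
    rw [List.mem_singleton] at hx; subst hx
    exact Or.inr (Or.inr ⟨rfl, rfl⟩)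
  | @stepB v w L' hvV hvw hsub ih =>
    obtain ⟨L'', rfl⟩ := hsub.head_shape
    intro z hz hzM x hx
    rw [List.getLast?_cons_cons] at hz
    rcases List.mem_cons.1 hx with rfl | hx'
    · exact Or.inl ⟨s(x, w), by rw [neList_ff]; exact List.mem_cons_self,
        Sym2.mem_mk_left x w⟩
    · rcases ih z hz hzM x hx' with ⟨e, he, hxe⟩ | ⟨_, rfl⟩ | ⟨h2, _⟩
      · exact Or.inl ⟨e, by rw [neList_ff]; exact List.mem_cons_of_mem _ he, hxe⟩
      · exact Or.inl ⟨s(v, x), by rw [neList_ff]; exact List.mem_cons_self,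
          Sym2.mem_mk_right v x⟩
      · exact absurd h2 (by simp)

lemma satN_or (h : Alt M N U V b v L) :
    ∀ z, L.getLast? = some z → ∀ x ∈ L, Sat N x ∨ (b = true ∧ x = v) ∨ x = z := by
  induction h with
  | stopA hvU hv =>
    intro z hz x hx
    rw [List.mem_singleton] at hx; subst hx
    exact Or.inr (Or.inl ⟨rfl, rfl⟩)
  | @stepA v w L' hvU hvw hsub ih =>
    obtain ⟨L'', rfl⟩ := hsub.head_shape
    intro z hz x hx
    rw [List.getLast?_cons_cons] at hz
    rcases List.mem_cons.1 hx with rfl | hx'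
    · exact Or.inr (Or.inl ⟨rfl, rfl⟩)
    · rcases ih z hz x hx' with h1 | ⟨h2, _⟩ | h3
      · exact Or.inl h1
      · exact absurd h2 (by simp)
      · exact Or.inr (Or.inr h3)
  | stopB hvV hv =>
    intro z hz x hx
    rw [List.mem_singleton] at hx; subst hx
    simp only [List.getLast?_singleton, Option.some.injEq] at hz
    exact Or.inr (Or.inr hz)
  | @stepB v w L' hvV hvw hsub ih =>
    obtain ⟨L'', rfl⟩ := hsub.head_shape
    intro z hz x hx
    rw [List.getLast?_cons_cons] at hz
    rcases List.mem_cons.1 hx with rfl | hx'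
    · exact Or.inl ⟨s(x, w), hvw, Sym2.mem_mk_left x w⟩
    · rcases ih z hz x hx' with h1 | ⟨_, rfl⟩ | h3
      · exact Or.inl h1
      · exact Or.inl ⟨s(v, x), hvw, Sym2.mem_mk_right v x⟩
      · exact Or.inr (Or.inr h3)

lemma satM_or (h : Alt M N U V b v L) :
    ∀ z, L.getLast? = some z → ∀ x ∈ L, Sat M x ∨ (b = false ∧ x = v) ∨ x = z := by
  induction h with
  | stopA hvU hv =>
    intro z hz x hx
    rw [List.mem_singleton] at hx; subst hx
    simp only [List.getLast?_singleton, Option.some.injEq] at hz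
    exact Or.inr (Or.inr hz)
  | @stepA v w L' hvU hvw hsub ih =>
    obtain ⟨L'', rfl⟩ := hsub.head_shape
    intro z hz x hx
    rw [List.getLast?_cons_cons] at hz
    rcases List.mem_cons.1 hx with rfl | hx'
    · exact Or.inl ⟨s(x, w), hvw, Sym2.mem_mk_left x w⟩
    · rcases ih z hz x hx' with h1 | ⟨_, rfl⟩ | h3
      · exact Or.inl h1
      · exact Or.inl ⟨s(v, x), hvw, Sym2.mem_mk_right v x⟩
      · exact Or.inr (Or.inr h3)
  | stopB hvV hv =>
    intro z hz x hx
    rw [List.mem_singleton] at hx; subst hx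
    exact Or.inr (Or.inl ⟨rfl, rfl⟩)
  | @stepB v w L' hvV hvw hsub ih =>
    obtain ⟨L'', rfl⟩ := hsub.head_shape
    intro z hz x hx
    rw [List.getLast?_cons_cons] at hz
    rcases List.mem_cons.1 hx with rfl | hx'
    · exact Or.inr (Or.inl ⟨rfl, rfl⟩)
    · rcases ih z hz x hx' with h1 | ⟨h2, _⟩ | h3
      · exact Or.inl h1
      · exact absurd h2 (by simp)
      · exact Or.inr (Or.inr h3)

lemma last_spec (h : Alt M N U V b v L) :
    ∀ z, L.getLast? = some z → (z ∈ U ∧ ¬ Sat M z) ∨ (z ∈ V ∧ ¬ Sat N z) := by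
  induction h with
  | stopA hvU hv =>
    intro z hz
    simp only [List.getLast?_singleton, Option.some.injEq] at hz
    subst hz; exact Or.inl ⟨hvU, hv⟩
  | @stepA v w L' hvU hvw hsub ih =>
    obtain ⟨L'', rfl⟩ := hsub.head_shape
    intro z hz
    rw [List.getLast?_cons_cons] at hz
    exact ih z hz
  | stopB hvV hv =>
    intro z hz
    simp only [List.getLast?_singleton, Option.some.injEq] at hz
    subst hz; exact Or.inr ⟨hvV, hv⟩
  | @stepB v w L' hvV hvw hsub ih =>
    obtain ⟨L'', rfl⟩ := hsub.head_shape
    intro z hz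
    rw [List.getLast?_cons_cons] at hz
    exact ih z hz

lemma suffix_alt (h : Alt M N U V b v L) :
    ∀ x ∈ L, ∃ b' L', Alt M N U V b' x L' ∧ L' <:+ L := by
  induction h with
  | stopA hvU hv =>
    intro x hx
    rw [List.mem_singleton] at hx; subst hx
    exact ⟨true, [x], Alt.stopA hvU hv, List.suffix_refl _⟩
  | @stepA v w L' hvU hvw hsub ih =>
    intro x hx
    rcases List.mem_cons.1 hx with rfl | hx'
    · exact ⟨true, x :: L', Alt.stepA hvU hvw hsub, List.suffix_refl _⟩
    · obtain ⟨b', L'', ha, hs⟩ := ih x hx'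
      exact ⟨b', L'', ha, hs.trans (List.suffix_cons _ _)⟩
  | stopB hvV hv =>
    intro x hx
    rw [List.mem_singleton] at hx; subst hx
    exact ⟨false, [x], Alt.stopB hvV hv, List.suffix_refl _⟩
  | @stepB v w L' hvV hvw hsub ih =>
    intro x hx
    rcases List.mem_cons.1 hx with rfl | hx'
    · exact ⟨false, x :: L', Alt.stepB hvV hvw hsub, List.suffix_refl _⟩
    · obtain ⟨b', L'', ha, hs⟩ := ih x hx'
      exact ⟨b', L'', ha, hs.trans (List.suffix_cons _ _)⟩

lemma inv_true (h : Alt M N U V true v L) (hs : Sat M v) :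
    ∃ w L'', L = v :: w :: L'' ∧ s(v, w) ∈ M ∧ Alt M N U V false w (w :: L'') := by
  cases h with
  | stopA hvU hv => exact absurd hs hv
  | @stepA _ w L' hvU hvw hsub =>
    obtain ⟨L'', rfl⟩ := hsub.head_shape
    exact ⟨w, L'', rfl, hvw, hsub⟩

end Alt



lemma Alt.ne_nil' {W : Type*} {M N : Finset (Sym2 W)} {U V : Finset W} {b v L}
    (h : Alt M N U V b v L) : 1 ≤ L.length := by
  cases h <;> simp

section Exist
variable {W : Type*} [Fintype W] [DecidableEq W] {G : SimpleGraph W}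
  {M N : Finset (Sym2 W)} {U V : Finset W}

lemma exists_chain_aux
    (hM : IsMatchingSet G M) (hN : IsMatchingSet G N)
    (hdisj : Disjoint U V)
    (hbip : ∀ a b : W, G.Adj a b → (a ∈ U ∧ b ∈ V) ∨ (a ∈ V ∧ b ∈ U))
    {s : W} (hsN : ¬ Sat N s) :
    ∀ (n : ℕ) (A : Finset W) (cur : W) (b : Bool),
      (Finset.univ \ A).card ≤ n →
      cur ∈ A → s ∈ A →
      (b = true → cur ∈ U) → (b = false → cur ∈ V) →
      (∀ x ∈ A, x ∈ V → x ≠ cur → ∀ y, s(x,y) ∈ M → y ∈ A ∧ y ≠ cur) →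
      (∀ x ∈ A, x ∈ U → x ≠ s → x ≠ cur → ∀ y, s(x,y) ∈ N → y ∈ A ∧ y ≠ cur) →
      (b = false → ∀ y, s(cur,y) ∈ M → y ∈ A ∧ y ≠ cur) →
      (b = true → cur ≠ s → ∀ y, s(cur,y) ∈ N → y ∈ A ∧ y ≠ cur) →
      ∃ L, Alt M N U V b cur L ∧ L.Nodup ∧ (∀ x ∈ L, x = cur ∨ x ∉ A) ∧
        (b = true → Sat M cur → 2 ≤ L.length) := by
  intro n
  induction n with
  | zero =>
    intro A cur b hcard hcur hs hbU hbV I1 I2 I3 I4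
    -- A must be everything; stop or contradiction
    have hAuniv : ∀ x : W, x ∈ A := by
      intro x
      by_contra hx
      have : x ∈ Finset.univ \ A := Finset.mem_sdiff.2 ⟨Finset.mem_univ _, hx⟩
      have := Finset.card_pos.2 ⟨x, this⟩
      omega
    cases b with
    | true =>
      by_cases hsat : Sat M cur
      · -- derive contradiction: fresh vertex exists
        obtain ⟨w, hw⟩ := exists_partner hsat
        have hadj := adj_of_mem hM hw
        have hcurU := hbU rfl
        have hwV : w ∈ V := by
          rcases hbip _ _ hadj with ⟨_, h⟩ | ⟨h, _⟩
          · exact h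
          · exact absurd hcurU (Finset.disjoint_right.1 hdisj h)
        have hwne : w ≠ cur := fun h => G.irrefl (h ▸ hadj)
        have := (I1 w (hAuniv w) hwV hwne cur (Sym2.eq_swap ▸ hw)).2
        exact absurd rfl this
      · exact ⟨[cur], Alt.stopA (hbU rfl) hsat, by simp, by simp,
          fun _ h => absurd h hsat⟩
    | false =>
      by_cases hsat : Sat N cur
      · obtain ⟨w, hw⟩ := exists_partner hsat
        have hadj := adj_of_mem hN hw
        have hcurV := hbV rfl
        have hwU : w ∈ U := by
          rcases hbip _ _ hadj with ⟨h, _⟩ | ⟨_, h⟩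
          · exact absurd hcurV (Finset.disjoint_left.1 hdisj h)
          · exact h
        have hwne : w ≠ cur := fun h => G.irrefl (h ▸ hadj)
        have hwns : w ≠ s := by
          rintro rfl
          exact hsN ⟨s(cur, w), hw, Sym2.mem_mk_right _ _⟩
        have := (I2 w (hAuniv w) hwU hwns hwne cur (Sym2.eq_swap ▸ hw)).2
        exact absurd rfl this
      · exact ⟨[cur], Alt.stopB (hbV rfl) hsat, by simp, by simp, by simp⟩
  | succ n ih =>
    intro A cur b hcard hcur hs hbU hbV I1 I2 I3 I4
    cases b with
    | true =>
      by_cases hsat : Sat M cur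
      · obtain ⟨w, hw⟩ := exists_partner hsat
        have hadj := adj_of_mem hM hw
        have hcurU := hbU rfl
        have hwV : w ∈ V := by
          rcases hbip _ _ hadj with ⟨_, h⟩ | ⟨h, _⟩
          · exact h
          · exact absurd hcurU (Finset.disjoint_right.1 hdisj h)
        have hwne : w ≠ cur := fun h => G.irrefl (h ▸ hadj)
        have hwA : w ∉ A := by
          intro hwA
          exact absurd rfl (I1 w hwA hwV hwne cur (Sym2.eq_swap ▸ hw)).2
        have hA'card : (Finset.univ \ insert w A).card ≤ n := by
          have h1 : Finset.univ \ insert w A = (Finset.univ \ A).erase w := by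
            ext x
            simp only [Finset.mem_sdiff, Finset.mem_univ, true_and, Finset.mem_insert,
              Finset.mem_erase]
            tauto
          rw [h1, Finset.card_erase_of_mem (Finset.mem_sdiff.2 ⟨Finset.mem_univ _, hwA⟩)]
          omega
        obtain ⟨L', ha', hnd', hmem', _⟩ :=
          ih (insert w A) w false hA'card (Finset.mem_insert_self _ _)
            (Finset.mem_insert_of_mem hs)
            (by simp) (fun _ => hwV)
            (by -- I1'
              intro x hx hxV hxw y hy
              rcases Finset.mem_insert.1 hx with rfl | hxA
              · exact absurd rfl hxw
              · have hxc : x ≠ cur := fun h =>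
                  (Finset.disjoint_right.1 hdisj hxV) (h ▸ hcurU)
                obtain ⟨h1, _⟩ := I1 x hxA hxV hxc y hy
                exact ⟨Finset.mem_insert_of_mem h1, fun h => hwA (h ▸ h1)⟩)
            (by -- I2'
              intro x hx hxU hxs hxw y hy
              have hxA : x ∈ A := by
                rcases Finset.mem_insert.1 hx with rfl | h
                · exact absurd rfl hxw
                · exact h
              by_cases hxc : x = cur
              · subst hxc
                obtain ⟨h1, _⟩ := I4 rfl hxs y hy
                exact ⟨Finset.mem_insert_of_mem h1, fun h => hwA (h ▸ h1)⟩
              · obtain ⟨h1, _⟩ := I2 x hxA hxU hxs hxc y hy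
                exact ⟨Finset.mem_insert_of_mem h1, fun h => hwA (h ▸ h1)⟩)
            (by -- I3'
              intro _ y hy
              have : y = cur := partner_unique' hM hy (Sym2.eq_swap ▸ hw)
              subst this
              exact ⟨Finset.mem_insert_of_mem hcur, hwne.symm⟩)
            (by intro h; cases h)
        refine ⟨cur :: L', Alt.stepA hcurU hw ha', ?_, ?_, ?_⟩
        · refine List.nodup_cons.2 ⟨?_, hnd'⟩
          intro hcl
          rcases hmem' cur hcl with h | h
          · exact hwne h.symm
          · exact h (Finset.mem_insert_of_mem hcur)
        · intro x hx
          rcases List.mem_cons.1 hx with rfl | hx'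
          · exact Or.inl rfl
          · rcases hmem' x hx' with rfl | h
            · exact Or.inr hwA
            · exact Or.inr fun hxA => h (Finset.mem_insert_of_mem hxA)
        · intro _ _
          have := ha'.ne_nil'
          simp only [List.length_cons]
          omega
      · exact ⟨[cur], Alt.stopA (hbU rfl) hsat, by simp, by simp,
          fun _ h => absurd h hsat⟩
    | false =>
      by_cases hsat : Sat N cur
      · obtain ⟨w, hw⟩ := exists_partner hsat
        have hadj := adj_of_mem hN hw
        have hcurV := hbV rfl
        have hwU : w ∈ U := by
          rcases hbip _ _ hadj with ⟨h, _⟩ | ⟨_, h⟩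
          · exact absurd hcurV (Finset.disjoint_left.1 hdisj h)
          · exact h
        have hwne : w ≠ cur := fun h => G.irrefl (h ▸ hadj)
        have hwns : w ≠ s := by
          rintro rfl
          exact hsN ⟨s(cur, w), hw, Sym2.mem_mk_right _ _⟩
        have hwA : w ∉ A := by
          intro hwA
          exact absurd rfl (I2 w hwA hwU hwns hwne cur (Sym2.eq_swap ▸ hw)).2
        have hA'card : (Finset.univ \ insert w A).card ≤ n := by
          have h1 : Finset.univ \ insert w A = (Finset.univ \ A).erase w := by
            ext x
            simp only [Finset.mem_sdiff, Finset.mem_univ, true_and, Finset.mem_insert,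
              Finset.mem_erase]
            tauto
          rw [h1, Finset.card_erase_of_mem (Finset.mem_sdiff.2 ⟨Finset.mem_univ _, hwA⟩)]
          omega
        obtain ⟨L', ha', hnd', hmem', _⟩ :=
          ih (insert w A) w true hA'card (Finset.mem_insert_self _ _)
            (Finset.mem_insert_of_mem hs)
            (fun _ => hwU) (by simp)
            (by -- I1'
              intro x hx hxV hxw y hy
              have hxA : x ∈ A := by
                rcases Finset.mem_insert.1 hx with rfl | h
                · exact absurd hxV (Finset.disjoint_left.1 hdisj hwU)
                · exact h
              by_cases hxc : x = cur
              · subst hxc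
                obtain ⟨h1, _⟩ := I3 rfl y hy
                exact ⟨Finset.mem_insert_of_mem h1, fun h => hwA (h ▸ h1)⟩
              · obtain ⟨h1, _⟩ := I1 x hxA hxV hxc y hy
                exact ⟨Finset.mem_insert_of_mem h1, fun h => hwA (h ▸ h1)⟩)
            (by -- I2'
              intro x hx hxU hxs hxw y hy
              rcases Finset.mem_insert.1 hx with rfl | hxA
              · exact absurd rfl hxw
              · have hxc : x ≠ cur := fun h =>
                  (Finset.disjoint_left.1 hdisj hxU) (h ▸ hcurV)
                obtain ⟨h1, _⟩ := I2 x hxA hxU hxs hxc y hy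
                exact ⟨Finset.mem_insert_of_mem h1, fun h => hwA (h ▸ h1)⟩)
            (by intro h; cases h)
            (by -- I4'
              intro _ _ y hy
              have : y = cur := partner_unique' hN hy (Sym2.eq_swap ▸ hw)
              subst this
              exact ⟨Finset.mem_insert_of_mem hcur, hwne.symm⟩)
        refine ⟨cur :: L', Alt.stepB hcurV hw ha', ?_, ?_, by simp⟩
        · refine List.nodup_cons.2 ⟨?_, hnd'⟩
          intro hcl
          rcases hmem' cur hcl with h | h
          · exact hwne h.symm
          · exact h (Finset.mem_insert_of_mem hcur)
        · intro x hx
          rcases List.mem_cons.1 hx with rfl | hx'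
          · exact Or.inl rfl
          · rcases hmem' x hx' with rfl | h
            · exact Or.inr hwA
            · exact Or.inr fun hxA => h (Finset.mem_insert_of_mem hxA)
      · exact ⟨[cur], Alt.stopB (hbV rfl) hsat, by simp, by simp, by simp⟩

lemma exists_chain
    (hM : IsMatchingSet G M) (hN : IsMatchingSet G N)
    (hdisj : Disjoint U V)
    (hbip : ∀ a b : W, G.Adj a b → (a ∈ U ∧ b ∈ V) ∨ (a ∈ V ∧ b ∈ U))
    {s : W} (hsU : s ∈ U) (hsN : ¬ Sat N s) :
    ∃ L, Alt M N U V true s L ∧ L.Nodup ∧ (Sat M s → 2 ≤ L.length) := by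
  obtain ⟨L, h1, h2, _, h4⟩ :=
    exists_chain_aux hM hN hdisj hbip hsN (Finset.univ \ {s}).card {s} s true le_rfl
      (Finset.mem_singleton_self s) (Finset.mem_singleton_self s)
      (fun _ => hsU)
      (by intro h; cases h)
      (by
        intro x hx hxV _
        rw [Finset.mem_singleton] at hx; subst hx
        exact absurd hxV (Finset.disjoint_left.1 hdisj hsU))
      (by
        intro x hx _ hxs
        rw [Finset.mem_singleton] at hx; exact absurd hx hxs)
      (by intro h; cases h)
      (by intro _ h; exact absurd rfl h)
  exact ⟨L, h1, h2, h4 rfl⟩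

end Exist

end EqmSat

namespace EqmSat
variable {W : Type*} {M N : Finset (Sym2 W)} {U V : Finset W} {b : Bool} {v : W} {L : List W}

lemma meList_nil (b : Bool) : meList (W := W) b [] = [] := by cases b <;> rfl
lemma meList_single (b : Bool) (v : W) : meList b [v] = [] := by cases b <;> rfl

lemma meList_mem : ∀ (b : Bool) (L : List W), ∀ e ∈ meList b L, ∀ x ∈ e, x ∈ L := by
  intro b L
  induction L generalizing b with
  | nil => simp [meList_nil]
  | cons v L ih =>
    cases L with
    | nil => simp [meList_single]
    | cons w L' =>
      cases b with
      | true =>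
        rw [meList_tt]
        rintro e he x hx
        rcases List.mem_cons.1 he with rfl | he'
        · rcases Sym2.mem_iff.1 hx with rfl | rfl <;> simp
        · exact List.mem_cons_of_mem _ (ih false e he' x hx)
      | false =>
        rw [meList_ff]
        intro e he x hx
        exact List.mem_cons_of_mem _ (ih true e he x hx)

lemma neList_mem (b : Bool) (L : List W) : ∀ e ∈ neList b L, ∀ x ∈ e, x ∈ L :=
  meList_mem (!b) L

lemma Alt.mem_head (h : Alt M N U V b v L) : v ∈ L := by
  obtain ⟨L', rfl⟩ := h.head_shape; simp

lemma Alt.side_t (h : Alt M N U V true v L) : v ∈ U := by cases h <;> assumption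
lemma Alt.side_f (h : Alt M N U V false v L) : v ∈ V := by cases h <;> assumption

end EqmSat

namespace EqmSat
section Main
variable {W : Type*} [Fintype W] [DecidableEq W] {G : SimpleGraph W}
  {M N : Finset (Sym2 W)} {U V : Finset W} {ν : ℕ}

lemma main_chain
    (hdisj : Disjoint U V)
    (hbip : ∀ a b : W, G.Adj a b → (a ∈ U ∧ b ∈ V) ∨ (a ∈ V ∧ b ∈ U))
    (hM : IsMatchingSet G M) (hN : IsMatchingSet G N)
    (hMc : M.card = ν) (hNc : N.card = ν)
    (hK : ∀ P : Finset (Sym2 W), IsMatchingSet G P → P.card ≤ ν)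
    {s : W} (hsU : s ∈ U) (hsN : ¬ Sat N s) :
    ∃ Mstar : Finset (Sym2 W), IsMatchingSet G Mstar ∧ Mstar.card = ν ∧ ¬ Sat Mstar s ∧
      (∀ x, x ∈ V → (Sat M x ↔ Sat Mstar x)) ∧
      (∀ t q, t ∈ V → q ∈ U → s(t,q) ∈ M →
        (s(t,q) ∈ Mstar ∨
          ∃ P : Finset (Sym2 W), IsMatchingSet G P ∧ P.card = ν ∧ ¬ Sat P q)) := by
  classical
  have huM : ∀ {e f : Sym2 W}, e ∈ M → f ∈ M → ∀ {x : W}, x ∈ e → x ∈ f → e = f := by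
    intro e f he hf x hx hx'; exact edge_unique hM he hf hx hx'
  have huN : ∀ {e f : Sym2 W}, e ∈ N → f ∈ N → ∀ {x : W}, x ∈ e → x ∈ f → e = f := by
    intro e f he hf x hx hx'; exact edge_unique hN he hf hx hx'
  by_cases hsM : Sat M s
  case neg =>
    exact ⟨M, hM, hMc, hsM, fun x _ => Iff.rfl, fun t q _ _ htq => Or.inl htq⟩
  -- build the alternating chain from s
  obtain ⟨L, halt, hnd, hlen2⟩ := exists_chain hM hN hdisj hbip hsU hsN
  have hlen : 2 ≤ L.length := hlen2 hsM
  cases hL : L.getLast? with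
  | none =>
    exfalso
    have : L = [] := List.getLast?_eq_none_iff.1 hL
    rw [this] at hlen; simp at hlen
  | some z =>
  have hzL : z ∈ L := List.mem_of_getLast? hL
  obtain ⟨w1, L1, hLshape, hsw1, halt1⟩ := halt.inv_true hsM
  have hzs : z ≠ s := by
    have h1 : (w1 :: L1).getLast? = some z := by
      rw [hLshape, List.getLast?_cons_cons] at hL; exact hL
    have h2 : z ∈ w1 :: L1 := List.mem_of_getLast? h1
    have h3 : s ∉ w1 :: L1 := (List.nodup_cons.1 (hLshape ▸ hnd)).1
    intro h; rw [h] at h2; exact h3 h2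
  set MEf := (meList true L).toFinset with hMEdef
  set NEf := (neList true L).toFinset with hNEdef
  have hMEsub : ∀ e ∈ MEf, e ∈ M := fun e he => halt.meList_sub e (List.mem_toFinset.1 he)
  have hNEsub : ∀ e ∈ NEf, e ∈ N := fun e he => halt.neList_sub e (List.mem_toFinset.1 he)
  have hMEend : ∀ e ∈ MEf, ∀ x ∈ e, x ∈ L :=
    fun e he => meList_mem true L e (List.mem_toFinset.1 he)
  have hNEend : ∀ e ∈ NEf, ∀ x ∈ e, x ∈ L :=
    fun e he => neList_mem true L e (List.mem_toFinset.1 he)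
  have hkeyN : ∀ x ∈ L, ∀ e ∈ N, x ∈ e → e ∈ NEf := by
    intro x hx e he hxe
    rcases halt.edgesN huN x hx e he hxe with h | ⟨_, rfl⟩
    · exact List.mem_toFinset.2 h
    · exact absurd ⟨e, he, hxe⟩ hsN
  have hkeyM : ∀ x ∈ L, ∀ e ∈ M, x ∈ e → e ∈ MEf := by
    intro x hx e he hxe
    rcases halt.edgesM huM x hx e he hxe with h | ⟨h2, _⟩
    · exact List.mem_toFinset.2 h
    · cases h2
  by_cases hzN : Sat N z
  case neg =>
    -- augmenting surgery: contradiction with hK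
    exfalso
    set Q := (N \ NEf) ∪ MEf with hQdef
    have hQ : IsMatchingSet G Q := by
      constructor
      · intro e he
        rw [Finset.mem_coe, hQdef, Finset.mem_union] at he
        rcases he with he | he
        · exact hN.1 (Finset.mem_sdiff.1 he).1
        · exact hM.1 (hMEsub e he)
      · intro e he f hf hef x hx
        obtain ⟨hxe, hxf⟩ := hx
        rw [hQdef, Finset.mem_union] at he hf
        rcases he with he | he <;> rcases hf with hf | hf
        · exact hN.2 e (Finset.mem_sdiff.1 he).1 f (Finset.mem_sdiff.1 hf).1 hef x ⟨hxe, hxf⟩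
        · have hxL : x ∈ L := hMEend f hf x hxf
          exact (Finset.mem_sdiff.1 he).2 (hkeyN x hxL e (Finset.mem_sdiff.1 he).1 hxe)
        · have hxL : x ∈ L := hMEend e he x hxe
          exact (Finset.mem_sdiff.1 hf).2 (hkeyN x hxL f (Finset.mem_sdiff.1 hf).1 hxf)
        · exact hM.2 e (hMEsub e he) f (hMEsub f hf) hef x ⟨hxe, hxf⟩
    have hQchar : ∀ x, Sat Q x ↔ (Sat N x ∨ x = s ∨ x = z) := by
      intro x
      constructor
      · rintro ⟨e, he, hxe⟩
        rw [hQdef, Finset.mem_union] at he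
        rcases he with he | he
        · exact Or.inl ⟨e, (Finset.mem_sdiff.1 he).1, hxe⟩
        · have hxL : x ∈ L := hMEend e he x hxe
          rcases halt.satN_or z hL x hxL with h | ⟨_, rfl⟩ | h
          · exact Or.inl h
          · exact Or.inr (Or.inl rfl)
          · exact Or.inr (Or.inr h)
      · rintro (⟨e, he, hxe⟩ | rfl | rfl)
        · by_cases hne : e ∈ NEf
          · have hxL : x ∈ L := hNEend e hne x hxe
            rcases halt.covM_of_lastN z hL hzN x hxL with ⟨e', he', hxe'⟩ | ⟨h2, _⟩ | ⟨_, h3⟩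
            · exact ⟨e', Finset.mem_union_right _ (List.mem_toFinset.2 he'), hxe'⟩
            · cases h2
            · rw [h3] at hlen; simp at hlen
          · exact ⟨e, Finset.mem_union_left _ (Finset.mem_sdiff.2 ⟨he, hne⟩), hxe⟩
        · obtain ⟨e, he, hxe⟩ := hsM
          exact ⟨e, Finset.mem_union_right _ (hkeyM x (halt.mem_head) e he hxe), hxe⟩
        · rcases halt.covM_of_lastN x hL hzN x hzL with ⟨e', he', hxe'⟩ | ⟨h2, _⟩ | ⟨_, h3⟩
          · exact ⟨e', Finset.mem_union_right _ (List.mem_toFinset.2 he'), hxe'⟩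
          · cases h2
          · rw [h3] at hlen; simp at hlen
    have hcovQ : cov Q = insert s (insert z (cov N)) := by
      ext x
      simp only [mem_cov, Finset.mem_insert, hQchar x]
      tauto
    have hc1 : (cov Q).card = (cov N).card + 2 := by
      rw [hcovQ]
      rw [Finset.card_insert_of_notMem, Finset.card_insert_of_notMem]
      · simp [mem_cov, hzN]
      · simp only [Finset.mem_insert, mem_cov]
        push_neg
        exact ⟨fun h => hzs h.symm, hsN⟩
    have e1 := cov_card hQ
    have e2 := cov_card hN
    have := hK Q hQ
    omega
  -- Sat N z : the last vertex is U-side, M-unsaturated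
  rcases halt.last_spec z hL with ⟨hzU, hzM⟩ | ⟨_, hzN'⟩
  swap
  · exact absurd hzN hzN'
  set Mstar := (M \ MEf) ∪ NEf with hMstardef
  have hMstar : IsMatchingSet G Mstar := by
    constructor
    · intro e he
      rw [Finset.mem_coe, hMstardef, Finset.mem_union] at he
      rcases he with he | he
      · exact hM.1 (Finset.mem_sdiff.1 he).1
      · exact hN.1 (hNEsub e he)
    · intro e he f hf hef x hx
      obtain ⟨hxe, hxf⟩ := hx
      rw [hMstardef, Finset.mem_union] at he hf
      rcases he with he | he <;> rcases hf with hf | hf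
      · exact hM.2 e (Finset.mem_sdiff.1 he).1 f (Finset.mem_sdiff.1 hf).1 hef x ⟨hxe, hxf⟩
      · have hxL : x ∈ L := hNEend f hf x hxf
        exact (Finset.mem_sdiff.1 he).2 (hkeyM x hxL e (Finset.mem_sdiff.1 he).1 hxe)
      · have hxL : x ∈ L := hNEend e he x hxe
        exact (Finset.mem_sdiff.1 hf).2 (hkeyM x hxL f (Finset.mem_sdiff.1 hf).1 hxf)
      · exact hN.2 e (hNEsub e he) f (hNEsub f hf) hef x ⟨hxe, hxf⟩
  have hMstar_s : ¬ Sat Mstar s := by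
    rintro ⟨e, he, hse⟩
    rw [hMstardef, Finset.mem_union] at he
    rcases he with he | he
    · exact (Finset.mem_sdiff.1 he).2
        (hkeyM s halt.mem_head e (Finset.mem_sdiff.1 he).1 hse)
    · exact hsN ⟨e, hNEsub e he, hse⟩
  have hfwd : ∀ x, Sat M x → x ≠ s → Sat Mstar x := by
    rintro x ⟨e, he, hxe⟩ hxs
    by_cases hme : e ∈ MEf
    · have hxL : x ∈ L := hMEend e hme x hxe
      rcases halt.covN_of_lastM z hL hzM x hxL with ⟨e', he', hxe'⟩ | ⟨_, rfl⟩ | ⟨h3, _⟩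
      · exact ⟨e', Finset.mem_union_right _ (List.mem_toFinset.2 he'), hxe'⟩
      · exact absurd rfl hxs
      · cases h3
    · exact ⟨e, Finset.mem_union_left _ (Finset.mem_sdiff.2 ⟨he, hme⟩), hxe⟩
  have hback : ∀ x, Sat Mstar x → Sat M x ∨ x = z := by
    rintro x ⟨e, he, hxe⟩
    rw [hMstardef, Finset.mem_union] at he
    rcases he with he | he
    · exact Or.inl ⟨e, (Finset.mem_sdiff.1 he).1, hxe⟩
    · have hxL : x ∈ L := hNEend e he x hxe
      rcases halt.satM_or z hL x hxL with h | ⟨h2, _⟩ | h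
      · exact Or.inl h
      · cases h2
      · exact Or.inr h
  have hMz : Sat Mstar z := by
    rcases halt.covN_of_lastM z hL hzM z hzL with ⟨e', he', hze'⟩ | ⟨_, h2⟩ | ⟨h3, _⟩
    · exact ⟨e', Finset.mem_union_right _ (List.mem_toFinset.2 he'), hze'⟩
    · exact absurd h2 hzs
    · cases h3
  have hcov : cov Mstar = insert z ((cov M).erase s) := by
    ext x
    simp only [mem_cov, Finset.mem_insert, Finset.mem_erase]
    constructor
    · intro hx
      rcases hback x hx with h | rfl
      · refine Or.inr ⟨?_, h⟩
        rintro rfl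
        exact hMstar_s hx
      · exact Or.inl rfl
    · rintro (rfl | ⟨hxs, hxM⟩)
      · exact hMz
      · exact hfwd x hxM hxs
  have hcard : Mstar.card = ν := by
    have e1 := cov_card hMstar
    have e2 := cov_card hM
    rw [hcov] at e1
    rw [Finset.card_insert_of_notMem (by simp [mem_cov, hzM]),
      Finset.card_erase_of_mem (by simp only [mem_cov]; exact hsM)] at e1
    have hpos : 1 ≤ (cov M).card := by
      refine Finset.card_pos.2 ⟨s, ?_⟩
      simp only [mem_cov]; exact hsM
    omega
  refine ⟨Mstar, hMstar, hcard, hMstar_s, ?_, ?_⟩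
  · intro x hxV
    constructor
    · intro hx
      refine hfwd x hx ?_
      rintro rfl
      exact (Finset.disjoint_left.1 hdisj hsU) hxV
    · intro hx
      rcases hback x hx with h | rfl
      · exact h
      · exact absurd hxV (Finset.disjoint_left.1 hdisj hzU)
  · intro t q htV hqU htq
    by_cases hin : s(t,q) ∈ Mstar
    · exact Or.inl hin
    right
    have hmem : s(t,q) ∈ MEf := by
      by_contra hno
      exact hin (Finset.mem_union_left _ (Finset.mem_sdiff.2 ⟨htq, hno⟩))
    have hqL : q ∈ L := hMEend _ hmem q (Sym2.mem_mk_right t q)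
    obtain ⟨b', Lq, haltq, hsuf⟩ := halt.suffix_alt q hqL
    cases b' with
    | false => exact absurd haltq.side_f (Finset.disjoint_left.1 hdisj hqU)
    | true =>
    have hSatMq : Sat M q := ⟨s(t,q), htq, Sym2.mem_mk_right t q⟩
    obtain ⟨w, L₂, hLqshape, hqw, haltT⟩ := haltq.inv_true hSatMq
    have htq' : s(q,t) ∈ M := by rw [Sym2.eq_swap]; exact htq
    have hwt : w = t := partner_unique hM hqw htq'
    subst hwt
    set Lt := w :: L₂ with hLtdef
    have hqLt : q ∉ Lt := by
      have hndq : (q :: Lt).Nodup := by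
        have := hnd.sublist hsuf.sublist
        rwa [hLqshape] at this
      exact (List.nodup_cons.1 hndq).1
    have hLtlast : Lt.getLast? = some z := by
      obtain ⟨pre, hpre⟩ := hsuf
      have h1 : L.getLast? = Lq.getLast? := by
        rw [← hpre]
        exact List.getLast?_append_of_ne_nil pre (by rw [hLqshape]; simp)
      rw [hL] at h1
      rw [hLqshape, List.getLast?_cons_cons] at h1
      exact h1.symm
    have hzw : z ≠ w := by
      intro h
      have hwV : w ∈ V := haltT.side_f
      exact (Finset.disjoint_left.1 hdisj hzU) (h ▸ hwV)
    have hLtnotsing : Lt ≠ [w] := by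
      intro h
      rw [h] at hLtlast
      simp only [List.getLast?_singleton, Option.some.injEq] at hLtlast
      exact hzw hLtlast.symm
    set MEt := (meList false Lt).toFinset with hMEtdef
    set NEt := (neList false Lt).toFinset with hNEtdef
    have hMEtsub : ∀ e ∈ MEt, e ∈ M := fun e he => haltT.meList_sub e (List.mem_toFinset.1 he)
    have hNEtsub : ∀ e ∈ NEt, e ∈ N := fun e he => haltT.neList_sub e (List.mem_toFinset.1 he)
    have hMEtend : ∀ e ∈ MEt, ∀ x ∈ e, x ∈ Lt :=
      fun e he => meList_mem false Lt e (List.mem_toFinset.1 he)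
    have hNEtend : ∀ e ∈ NEt, ∀ x ∈ e, x ∈ Lt :=
      fun e he => neList_mem false Lt e (List.mem_toFinset.1 he)
    have hkeyMt : ∀ x ∈ Lt, ∀ e ∈ M, x ∈ e → (e ∈ MEt ∨ e = s(w,q)) := by
      intro x hx e he hxe
      rcases haltT.edgesM huM x hx e he hxe with h | ⟨_, hxw⟩
      · exact Or.inl (List.mem_toFinset.2 h)
      · have h1 : e = s(q,w) := huM he hqw (hxw ▸ hxe) (Sym2.mem_mk_right q w)
        right; rw [h1, Sym2.eq_swap]
    set RE := insert (s(w,q)) MEt with hREdef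
    set P := (M \ RE) ∪ NEt with hPdef
    have hswq : s(w,q) ∈ M := by rw [Sym2.eq_swap]; exact hqw
    have hP : IsMatchingSet G P := by
      constructor
      · intro e he
        rw [Finset.mem_coe, hPdef, Finset.mem_union] at he
        rcases he with he | he
        · exact hM.1 (Finset.mem_sdiff.1 he).1
        · exact hN.1 (hNEtsub e he)
      · intro e he f hf hef x hx
        obtain ⟨hxe, hxf⟩ := hx
        rw [hPdef, Finset.mem_union] at he hf
        rcases he with he | he <;> rcases hf with hf | hf
        · exact hM.2 e (Finset.mem_sdiff.1 he).1 f (Finset.mem_sdiff.1 hf).1 hef x ⟨hxe, hxf⟩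
        · have hxL : x ∈ Lt := hNEtend f hf x hxf
          rcases hkeyMt x hxL e (Finset.mem_sdiff.1 he).1 hxe with h | rfl
          · exact (Finset.mem_sdiff.1 he).2 (Finset.mem_insert_of_mem h)
          · exact (Finset.mem_sdiff.1 he).2 (Finset.mem_insert_self _ _)
        · have hxL : x ∈ Lt := hNEtend e he x hxe
          rcases hkeyMt x hxL f (Finset.mem_sdiff.1 hf).1 hxf with h | rfl
          · exact (Finset.mem_sdiff.1 hf).2 (Finset.mem_insert_of_mem h)
          · exact (Finset.mem_sdiff.1 hf).2 (Finset.mem_insert_self _ _)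
        · exact hN.2 e (hNEtsub e he) f (hNEtsub f hf) hef x ⟨hxe, hxf⟩
    have hPq : ¬ Sat P q := by
      rintro ⟨e, he, hqe⟩
      rw [hPdef, Finset.mem_union] at he
      rcases he with he | he
      · have : e = s(w,q) := huM (Finset.mem_sdiff.1 he).1 hswq hqe (Sym2.mem_mk_right w q)
        exact (Finset.mem_sdiff.1 he).2 (this ▸ Finset.mem_insert_self _ _)
      · exact hqLt (hNEtend e he q hqe)
    have hfwdP : ∀ x, Sat M x → x ≠ q → Sat P x := by
      rintro x ⟨e, he, hxe⟩ hxq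
      by_cases hre : e ∈ RE
      · have hxL : x ∈ Lt := by
          rw [hREdef, Finset.mem_insert] at hre
          rcases hre with rfl | hre
          · rcases Sym2.mem_iff.1 hxe with rfl | rfl
            · exact List.mem_cons_self
            · exact absurd rfl hxq
          · exact hMEtend e hre x hxe
        rcases haltT.covN_of_lastM z hLtlast hzM x hxL with ⟨e', he', hxe'⟩ | ⟨h2, _⟩ | ⟨_, h3⟩
        · exact ⟨e', Finset.mem_union_right _ (List.mem_toFinset.2 he'), hxe'⟩
        · cases h2
        · exact absurd h3 hLtnotsing
      · exact ⟨e, Finset.mem_union_left _ (Finset.mem_sdiff.2 ⟨he, hre⟩), hxe⟩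
    have hbackP : ∀ x, Sat P x → Sat M x ∨ x = z := by
      rintro x ⟨e, he, hxe⟩
      rw [hPdef, Finset.mem_union] at he
      rcases he with he | he
      · exact Or.inl ⟨e, (Finset.mem_sdiff.1 he).1, hxe⟩
      · have hxL : x ∈ Lt := hNEtend e he x hxe
        rcases haltT.satM_or z hLtlast x hxL with h | ⟨_, rfl⟩ | h
        · exact Or.inl h
        · exact Or.inl ⟨s(x,q), hswq, Sym2.mem_mk_left x q⟩
        · exact Or.inr h
    have hzLt : z ∈ Lt := List.mem_of_getLast? hLtlast
    have hPz : Sat P z := by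
      rcases haltT.covN_of_lastM z hLtlast hzM z hzLt with ⟨e', he', hze'⟩ | ⟨h2, _⟩ | ⟨_, h3⟩
      · exact ⟨e', Finset.mem_union_right _ (List.mem_toFinset.2 he'), hze'⟩
      · cases h2
      · exact absurd h3 hLtnotsing
    have hzq : z ≠ q := by
      intro h; rw [h] at hzLt; exact hqLt hzLt
    have hcovP : cov P = insert z ((cov M).erase q) := by
      ext x
      simp only [mem_cov, Finset.mem_insert, Finset.mem_erase]
      constructor
      · intro hx
        rcases hbackP x hx with h | rfl
        · refine Or.inr ⟨?_, h⟩
          rintro rfl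
          exact hPq hx
        · exact Or.inl rfl
      · rintro (rfl | ⟨hxq, hxM⟩)
        · exact hPz
        · exact hfwdP x hxM hxq
    have hcardP : P.card = ν := by
      have e1 := cov_card hP
      have e2 := cov_card hM
      rw [hcovP] at e1
      rw [Finset.card_insert_of_notMem (by simp [mem_cov, hzM]),
        Finset.card_erase_of_mem (by simp only [mem_cov]; exact hSatMq)] at e1
      have hpos : 1 ≤ (cov M).card := by
        refine Finset.card_pos.2 ⟨q, ?_⟩
        simp only [mem_cov]; exact hSatMq
      omega
    exact ⟨P, hP, hcardP, hPq⟩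

end Main
end EqmSat

namespace EqmSat
section Cor
variable {W : Type*} [Fintype W] [DecidableEq W] {G : SimpleGraph W}
  {M N : Finset (Sym2 W)} {U V : Finset W} {ν : ℕ}

lemma matching_subset {M' : Finset (Sym2 W)} (hsub : M' ⊆ M) (hM : IsMatchingSet G M) :
    IsMatchingSet G M' :=
  ⟨fun e he => hM.1 (hsub (Finset.mem_coe.1 he)),
   fun e he f hf hef v => hM.2 e (hsub he) f (hsub hf) hef v⟩

lemma insert_matching (hM : IsMatchingSet G M) {a b : W} (hadj : G.Adj a b)
    (ha : ¬ Sat M a) (hb : ¬ Sat M b) :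
    IsMatchingSet G (insert s(a,b) M) ∧ s(a,b) ∉ M := by
  have hnotin : s(a,b) ∉ M := fun h => ha ⟨s(a,b), h, Sym2.mem_mk_left a b⟩
  refine ⟨⟨?_, ?_⟩, hnotin⟩
  · intro e he
    rw [Finset.mem_coe, Finset.mem_insert] at he
    rcases he with rfl | he
    · exact G.mem_edgeSet.2 hadj
    · exact hM.1 he
  · intro e he f hf hef v hv
    obtain ⟨hve, hvf⟩ := hv
    rw [Finset.mem_insert] at he hf
    rcases he with rfl | he <;> rcases hf with rfl | hf
    · exact hef rfl
    · rcases Sym2.mem_iff.1 hve with rfl | rfl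
      · exact ha ⟨f, hf, hvf⟩
      · exact hb ⟨f, hf, hvf⟩
    · rcases Sym2.mem_iff.1 hvf with rfl | rfl
      · exact ha ⟨e, he, hve⟩
      · exact hb ⟨e, he, hve⟩
    · exact hM.2 e he f hf hef v ⟨hve, hvf⟩

lemma corA
    (hdisj : Disjoint U V)
    (hbip : ∀ a b : W, G.Adj a b → (a ∈ U ∧ b ∈ V) ∨ (a ∈ V ∧ b ∈ U))
    (hM : IsMatchingSet G M) (hN : IsMatchingSet G N)
    (hMc : M.card = ν) (hNc : N.card = ν)
    (hK : ∀ P : Finset (Sym2 W), IsMatchingSet G P → P.card ≤ ν)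
    {s t : W} (hsU : s ∈ U) (hsN : ¬ Sat N s) (htV : t ∈ V) (htM : ¬ Sat M t)
    (hadj : G.Adj s t) : False := by
  obtain ⟨Ms, hMs, hMsc, hMss, hViff, _⟩ :=
    main_chain hdisj hbip hM hN hMc hNc hK hsU hsN
  have htMs : ¬ Sat Ms t := fun h => htM ((hViff t htV).2 h)
  obtain ⟨hQ, hnotin⟩ := insert_matching hMs hadj hMss htMs
  have hcard : (insert s(s,t) Ms).card = ν + 1 := by
    rw [Finset.card_insert_of_notMem hnotin, hMsc]
  have := hK _ hQ
  omega

lemma corB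
    (hdisj : Disjoint U V)
    (hbip : ∀ a b : W, G.Adj a b → (a ∈ U ∧ b ∈ V) ∨ (a ∈ V ∧ b ∈ U))
    (hM : IsMatchingSet G M) (hN : IsMatchingSet G N)
    (hMc : M.card = ν) (hNc : N.card = ν)
    (hK : ∀ P : Finset (Sym2 W), IsMatchingSet G P → P.card ≤ ν)
    {s t q : W} (hsU : s ∈ U) (hsN : ¬ Sat N s) (htV : t ∈ V) (hqU : q ∈ U)
    (hadj : G.Adj s t) (htq : s(t,q) ∈ M) :
    ∃ P : Finset (Sym2 W), IsMatchingSet G P ∧ P.card = ν ∧ ¬ Sat P q := by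
  obtain ⟨Ms, hMs, hMsc, hMss, hViff, hclause⟩ :=
    main_chain hdisj hbip hM hN hMc hNc hK hsU hsN
  rcases hclause t q htV hqU htq with hin | hP
  · by_cases hqs : q = s
    · exact ⟨Ms, hMs, hMsc, hqs ▸ hMss⟩
    · have hbase : IsMatchingSet G (Ms.erase s(t,q)) :=
        matching_subset (Finset.erase_subset _ _) hMs
      have hsb : ¬ Sat (Ms.erase s(t,q)) s := by
        rintro ⟨e, he, hse⟩
        exact hMss ⟨e, Finset.mem_of_mem_erase he, hse⟩
      have htb : ¬ Sat (Ms.erase s(t,q)) t := by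
        rintro ⟨e, he, hte⟩
        have : e = s(t,q) :=
          edge_unique hMs (Finset.mem_of_mem_erase he) hin hte (Sym2.mem_mk_left t q)
        exact (Finset.mem_erase.1 he).1 this
      obtain ⟨hPm, hnotin⟩ := insert_matching hbase hadj hsb htb
      refine ⟨insert s(s,t) (Ms.erase s(t,q)), hPm, ?_, ?_⟩
      · have hν : 1 ≤ ν := by
          rw [← hMsc]; exact Finset.card_pos.2 ⟨_, hin⟩
        rw [Finset.card_insert_of_notMem hnotin, Finset.card_erase_of_mem hin, hMsc]
        omega
      · rintro ⟨e, he, hqe⟩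
        rw [Finset.mem_insert] at he
        rcases he with rfl | he
        · rcases Sym2.mem_iff.1 hqe with rfl | rfl
          · exact hqs rfl
          · exact (Finset.disjoint_left.1 hdisj hqU) htV
        · have : e = s(t,q) :=
            edge_unique hMs (Finset.mem_of_mem_erase he) hin hqe (Sym2.mem_mk_right t q)
          exact (Finset.mem_erase.1 he).1 this
  · exact hP

end Cor
end EqmSat

namespace EqmSat
section Greedy
variable {W : Type*} [Fintype W] [DecidableEq W] {G : SimpleGraph W}
  {U V : Finset W}

lemma exists_maximal_ext :
    ∀ (n : ℕ) (F : Finset (Sym2 W)), IsMatchingSet G F →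
      Fintype.card (Sym2 W) - F.card ≤ n →
      ∃ F', IsMaximalMatching G F' ∧ F.card ≤ F'.card := by
  intro n
  induction n with
  | zero =>
    intro F hF hn
    by_cases hmax : IsMaximalMatching G F
    · exact ⟨F, hmax, le_rfl⟩
    · exfalso
      have hFcard : F.card = Fintype.card (Sym2 W) := by
        have := Finset.card_le_univ F
        omega
      have hFuniv : F = Finset.univ := Finset.eq_univ_of_card F hFcard
      apply hmax
      refine ⟨hF, ?_⟩
      intro e he
      refine ⟨e, hFuniv ▸ Finset.mem_univ e, ?_⟩
      obtain ⟨a, b, rfl⟩ := sym2_rep e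
      exact ⟨a, Sym2.mem_mk_left a b, Sym2.mem_mk_left a b⟩
  | succ n ih =>
    intro F hF hn
    by_cases hmax : IsMaximalMatching G F
    · exact ⟨F, hmax, le_rfl⟩
    · have hex : ∃ e ∈ G.edgeSet, ∀ f ∈ F, ∀ v : W, ¬ (v ∈ e ∧ v ∈ f) := by
        by_contra hno
        push_neg at hno
        apply hmax
        refine ⟨hF, ?_⟩
        intro e he
        obtain ⟨f, hf, v, hv1, hv2⟩ := hno e he
        exact ⟨f, hf, v, hv1, hv2⟩
      obtain ⟨e, he, hdom⟩ := hex
      have henotF : e ∉ F := by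
        intro heF
        obtain ⟨a, b, rfl⟩ := sym2_rep e
        exact hdom _ heF a ⟨Sym2.mem_mk_left a b, Sym2.mem_mk_left a b⟩
      have hF' : IsMatchingSet G (insert e F) := by
        constructor
        · intro f hf
          rw [Finset.mem_coe, Finset.mem_insert] at hf
          rcases hf with rfl | hf
          · exact he
          · exact hF.1 hf
        · intro f hf g hg hfg v hv
          obtain ⟨hvf, hvg⟩ := hv
          rw [Finset.mem_insert] at hf hg
          rcases hf with rfl | hf <;> rcases hg with rfl | hg
          · exact hfg rfl
          · exact hdom g hg v ⟨hvf, hvg⟩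
          · exact hdom f hf v ⟨hvg, hvf⟩
          · exact hF.2 f hf g hg hfg v ⟨hvf, hvg⟩
      obtain ⟨F', hF'max, hle⟩ := ih (insert e F) hF' (by
        have := Finset.card_le_univ (insert e F)
        rw [Finset.card_insert_of_notMem henotF] at this ⊢
        omega)
      refine ⟨F', hF'max, le_trans ?_ hle⟩
      rw [Finset.card_insert_of_notMem henotF]
      omega

/-- two `V`-vertices of the same edge coincide -/
lemma twoV (hdisj : Disjoint U V)
    (hbip : ∀ a b : W, G.Adj a b → (a ∈ U ∧ b ∈ V) ∨ (a ∈ V ∧ b ∈ U))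
    {e : Sym2 W} (he : e ∈ G.edgeSet) {x y : W} (hx : x ∈ e) (hy : y ∈ e)
    (hxV : x ∈ V) (hyV : y ∈ V) : x = y := by
  induction e with
  | h a b =>
    have hadj : G.Adj a b := G.mem_edgeSet.1 he
    rcases hbip a b hadj with ⟨haU, hbV⟩ | ⟨haV, hbU⟩
    · rcases Sym2.mem_iff.1 hx with rfl | rfl
      · exact absurd hxV (Finset.disjoint_left.1 hdisj haU)
      · rcases Sym2.mem_iff.1 hy with rfl | rfl
        · exact absurd hyV (Finset.disjoint_left.1 hdisj haU)
        · rfl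
    · rcases Sym2.mem_iff.1 hx with rfl | rfl
      · rcases Sym2.mem_iff.1 hy with rfl | rfl
        · rfl
        · exact absurd hyV (Finset.disjoint_left.1 hdisj hbU)
      · exact absurd hxV (Finset.disjoint_left.1 hdisj hbU)

lemma twoU (hdisj : Disjoint U V)
    (hbip : ∀ a b : W, G.Adj a b → (a ∈ U ∧ b ∈ V) ∨ (a ∈ V ∧ b ∈ U))
    {e : Sym2 W} (he : e ∈ G.edgeSet) {x y : W} (hx : x ∈ e) (hy : y ∈ e)
    (hxU : x ∈ U) (hyU : y ∈ U) : x = y := by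
  induction e with
  | h a b =>
    have hadj : G.Adj a b := G.mem_edgeSet.1 he
    rcases hbip a b hadj with ⟨haU, hbV⟩ | ⟨haV, hbU⟩
    · rcases Sym2.mem_iff.1 hx with rfl | rfl
      · rcases Sym2.mem_iff.1 hy with rfl | rfl
        · rfl
        · exact absurd hyU (Finset.disjoint_right.1 hdisj hbV)
      · exact absurd hxU (Finset.disjoint_right.1 hdisj hbV)
    · rcases Sym2.mem_iff.1 hx with rfl | rfl
      · exact absurd hxU (Finset.disjoint_right.1 hdisj haV)
      · rcases Sym2.mem_iff.1 hy with rfl | rfl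
        · exact absurd hyU (Finset.disjoint_right.1 hdisj haV)
        · rfl

lemma edge_hasU
    (hbip : ∀ a b : W, G.Adj a b → (a ∈ U ∧ b ∈ V) ∨ (a ∈ V ∧ b ∈ U))
    {e : Sym2 W} (he : e ∈ G.edgeSet) : ∃ a ∈ U, a ∈ e := by
  induction e with
  | h a b =>
    rcases hbip a b (G.mem_edgeSet.1 he) with ⟨haU, _⟩ | ⟨_, hbU⟩
    · exact ⟨a, haU, Sym2.mem_mk_left a b⟩
    · exact ⟨b, hbU, Sym2.mem_mk_right a b⟩

/-- a crossing edge out of a set touched by a connected graph -/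
lemma exists_boundary (hconn : G.Connected) (A : Set W) {x y : W}
    (hx : x ∈ A) (hy : y ∉ A) : ∃ a b, a ∈ A ∧ b ∉ A ∧ G.Adj a b := by
  have key : ∀ {u v : W}, G.Walk u v → u ∈ A → v ∉ A →
      ∃ a b, a ∈ A ∧ b ∉ A ∧ G.Adj a b := by
    intro u v w
    induction w with
    | nil => intro h1 h2; exact absurd h1 h2
    | @cons a c d h p ih =>
      intro h1 h2
      by_cases hm : c ∈ A
      · exact ih hm h2
      · exact ⟨a, c, h1, hm, h⟩
  obtain ⟨w⟩ := hconn.preconnected x y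
  exact key w hx hy

end Greedy
end EqmSat

open EqmSat in
/-- A connected bipartite graph with bipartition `U ∪ V`, `|U| ≤ |V|`, is equimatchable
iff every maximal matching saturates every vertex of `U`. -/
theorem equimatchable_iff_saturates {W : Type*} [Fintype W] [DecidableEq W]
    (G : SimpleGraph W) (U V : Finset W)
    (hdisj : Disjoint U V) (hcover : U ∪ V = Finset.univ)
    (hbip : ∀ a b : W, G.Adj a b → (a ∈ U ∧ b ∈ V) ∨ (a ∈ V ∧ b ∈ U))
    (hconn : G.Connected) (hcard : U.card ≤ V.card) :
    Equimatchable G ↔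
      ∀ M : Finset (Sym2 W), IsMaximalMatching G M → ∀ u ∈ U, ∃ e ∈ M, u ∈ e := by
  classical
  constructor
  · -- hard direction
    intro hEQ
    by_contra hno
    push_neg at hno
    obtain ⟨M₀, hM₀max, u₀, hu₀U, hu₀⟩ := hno
    have hM₀ : IsMatchingSet G M₀ := hM₀max.1
    have hu₀sat : ¬ Sat M₀ u₀ := by rintro ⟨e, he, hue⟩; exact hu₀ e he hue
    set ν₀ := M₀.card with hν₀def
    have hK : ∀ P : Finset (Sym2 W), IsMatchingSet G P → P.card ≤ ν₀ := by
      intro P hP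
      obtain ⟨F', hF'max, hle⟩ :=
        exists_maximal_ext (G := G) (Fintype.card (Sym2 W)) P hP (by omega)
      calc P.card ≤ F'.card := hle
        _ = ν₀ := hEQ F' M₀ hF'max hM₀max
    set S : W → Prop := fun x => x ∈ U ∧ ∃ P : Finset (Sym2 W),
      IsMatchingSet G P ∧ P.card = ν₀ ∧ ¬ Sat P x with hSdef
    have hu₀S : S u₀ := ⟨hu₀U, M₀, hM₀, rfl, hu₀sat⟩
    have hTV : ∀ y t, S y → G.Adj y t → t ∈ V := by
      intro y t hSy hadj
      rcases hbip y t hadj with ⟨_, h⟩ | ⟨h, _⟩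
      · exact h
      · exact absurd hSy.1 (Finset.disjoint_right.1 hdisj h)
    have F1 : ∀ t, (∃ y, S y ∧ G.Adj y t) → Sat M₀ t := by
      rintro t ⟨y, hSy, hadj⟩
      obtain ⟨hyU, P, hP, hPc, hPy⟩ := hSy
      by_contra htM
      exact corA hdisj hbip hM₀ hP rfl hPc hK hyU hPy
        (hTV y t ⟨hyU, P, hP, hPc, hPy⟩ hadj) htM hadj
    have F2 : ∀ t q, (∃ y, S y ∧ G.Adj y t) → s(t,q) ∈ M₀ → S q := by
      rintro t q ⟨y, hSy, hadj⟩ htq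
      have htV : t ∈ V := hTV y t hSy hadj
      have hqU : q ∈ U := by
        have hadj2 : G.Adj t q := G.mem_edgeSet.1 (hM₀.1 htq)
        rcases hbip t q hadj2 with ⟨h, _⟩ | ⟨_, h⟩
        · exact absurd htV (Finset.disjoint_left.1 hdisj h)
        · exact h
      obtain ⟨hyU, P, hP, hPc, hPy⟩ := hSy
      obtain ⟨P', hP', hP'c, hP'q⟩ :=
        corB hdisj hbip hM₀ hP rfl hPc hK hyU hPy htV hqU hadj htq
      exact ⟨hqU, P', hP', hP'c, hP'q⟩
    -- some U-vertex is not in S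
    have hsU' : ∃ s', s' ∈ U ∧ ¬ S s' := by
      by_contra hall
      push_neg at hall
      have hVsat : ∀ v ∈ V, Sat M₀ v := by
        intro v hvV
        have hvu₀ : v ≠ u₀ := by
          rintro rfl; exact (Finset.disjoint_left.1 hdisj hu₀U) hvV
        obtain ⟨wlk⟩ := hconn.preconnected v u₀
        cases wlk with
        | nil => exact absurd rfl hvu₀
        | @cons _ c _ hadj p =>
          have hcU : c ∈ U := by
            rcases hbip v c hadj with ⟨h, _⟩ | ⟨_, h⟩
            · exact absurd h (Finset.disjoint_right.1 hdisj hvV)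
            · exact h
          exact F1 v ⟨c, hall c hcU, hadj.symm⟩
      have hVle : V.card ≤ ν₀ := by
        refine Finset.card_le_card_of_injOn
          (fun v => if h : Sat M₀ v then h.choose else s(v,v)) ?_ ?_
        · intro v hv
          have h := hVsat v hv
          simp only [dif_pos h]
          exact h.choose_spec.1
        · intro v hv v' hv' heq
          rw [Finset.mem_coe] at hv hv'
          have h := hVsat v hv
          have h' := hVsat v' hv'
          simp only [dif_pos h, dif_pos h'] at heq
          have h1 := h.choose_spec
          have h2 := h'.choose_spec
          exact twoV hdisj hbip (hM₀.1 h1.1) h1.2 (heq ▸ h2.2) hv hv'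
      have hUge : ν₀ ≤ (U.erase u₀).card := by
        refine Finset.card_le_card_of_injOn
          (fun e => if h : ∃ a ∈ U, a ∈ e then h.choose else u₀) ?_ ?_
        · intro e he
          have hU := edge_hasU hbip (hM₀.1 he)
          simp only [dif_pos hU]
          obtain ⟨h1, h2⟩ := hU.choose_spec
          refine Finset.mem_erase.2 ⟨?_, h1⟩
          intro heq
          exact hu₀sat ⟨e, he, heq ▸ h2⟩
        · intro e he e' he' heq
          rw [Finset.mem_coe] at he he'
          have hU := edge_hasU hbip (hM₀.1 he)
          have hU' := edge_hasU hbip (hM₀.1 he')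
          simp only [dif_pos hU, dif_pos hU'] at heq
          exact edge_unique hM₀ he he' hU.choose_spec.2 (heq ▸ hU'.choose_spec.2)
      have h1 : 1 ≤ U.card := Finset.card_pos.2 ⟨u₀, hu₀U⟩
      have h2 := Finset.card_erase_of_mem hu₀U
      omega
    obtain ⟨s₁, hs₁U, hs₁nS⟩ := hsU'
    set A : Set W := {x | S x ∨ ∃ y, S y ∧ G.Adj y x} with hAdef
    have hu₀A : u₀ ∈ A := Or.inl hu₀S
    have hs₁A : s₁ ∉ A := by
      rintro (h | ⟨y, hSy, hadj⟩)
      · exact hs₁nS h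
      · exact (Finset.disjoint_left.1 hdisj hs₁U) (hTV y s₁ hSy hadj)
    obtain ⟨a, b, haA, hbA, hab⟩ := exists_boundary hconn A hu₀A hs₁A
    have haT : ∃ y, S y ∧ G.Adj y a := by
      rcases haA with hSa | hT
      · exact absurd (Or.inr ⟨a, hSa, hab⟩) hbA
      · exact hT
    have haV : a ∈ V := by
      obtain ⟨y, hSy, hadj⟩ := haT; exact hTV y a hSy hadj
    have hbU : b ∈ U := by
      rcases hbip a b hab with ⟨h, _⟩ | ⟨_, h⟩
      · exact absurd haV (Finset.disjoint_left.1 hdisj h)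
      · exact h
    have hbnS : ¬ S b := fun h => hbA (Or.inl h)
    have haSat : Sat M₀ a := F1 a haT
    obtain ⟨p, hp⟩ := exists_partner haSat
    have hpS : S p := F2 a p haT hp
    have hbSat : Sat M₀ b := by
      by_contra h
      exact hbnS ⟨hbU, M₀, hM₀, rfl, h⟩
    obtain ⟨v', hv'⟩ := exists_partner hbSat
    have hv'V : v' ∈ V := by
      have hadj : G.Adj b v' := G.mem_edgeSet.1 (hM₀.1 hv')
      rcases hbip b v' hadj with ⟨_, h⟩ | ⟨h, _⟩
      · exact h
      · exact absurd hbU (Finset.disjoint_right.1 hdisj h)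
    have hv'T : ¬ ∃ y, S y ∧ G.Adj y v' := by
      rintro ⟨y, hSy, hadj⟩
      exact hbnS (F2 v' b ⟨y, hSy, hadj⟩ (by rw [Sym2.eq_swap]; exact hv'))
    have hpb : p ≠ b := fun h => hbnS (h ▸ hpS)
    have he1e2 : s(a,p) ≠ s(b,v') := by
      intro h
      rcases Sym2.eq_iff.1 h with ⟨h1, _⟩ | ⟨_, h2⟩
      · exact (Finset.disjoint_left.1 hdisj (h1 ▸ hbU)) haV
      · exact hpb h2
    set base := (M₀.erase s(a,p)).erase s(b,v') with hbasedef
    have hbasesub : base ⊆ M₀ := (Finset.erase_subset _ _).trans (Finset.erase_subset _ _)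
    have hbase : IsMatchingSet G base := matching_subset hbasesub hM₀
    have hbase_a : ¬ Sat base a := by
      rintro ⟨e, he, hae⟩
      have h1 : e = s(a,p) := edge_unique hM₀ (hbasesub he) hp hae (Sym2.mem_mk_left a p)
      exact (Finset.mem_erase.1 (Finset.mem_of_mem_erase he)).1 h1
    have hbase_b : ¬ Sat base b := by
      rintro ⟨e, he, hbe⟩
      have h1 : e = s(b,v') := edge_unique hM₀ (hbasesub he) hv' hbe (Sym2.mem_mk_left b v')
      exact (Finset.mem_erase.1 he).1 h1
    obtain ⟨hFm, hFnotin⟩ := insert_matching hbase hab hbase_a hbase_b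
    set Fs := insert s(a,b) base with hFsdef
    have hν₀2 : 2 ≤ ν₀ := by
      have hsub2 : ({s(a,p), s(b,v')} : Finset (Sym2 W)) ⊆ M₀ := by
        intro e he
        rcases Finset.mem_insert.1 he with rfl | he
        · exact hp
        · rw [Finset.mem_singleton] at he; exact he ▸ hv'
      have hc2 : ({s(a,p), s(b,v')} : Finset (Sym2 W)).card = 2 := by
        rw [Finset.card_insert_of_notMem (by simp [he1e2]), Finset.card_singleton]
      have := Finset.card_le_card hsub2
      omega
    have hFscard : Fs.card = ν₀ - 1 := by
      rw [hFsdef, Finset.card_insert_of_notMem hFnotin, hbasedef,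
        Finset.card_erase_of_mem (Finset.mem_erase.2 ⟨fun h => he1e2 h.symm, hv'⟩),
        Finset.card_erase_of_mem hp]
      omega
    have hbSatF : Sat Fs b := ⟨s(a,b), Finset.mem_insert_self _ _, Sym2.mem_mk_right a b⟩
    have haSatF : Sat Fs a := ⟨s(a,b), Finset.mem_insert_self _ _, Sym2.mem_mk_left a b⟩
    have key2 : ∀ α β, G.Adj α β → α ∈ U → β ∈ V → ¬ Sat Fs α → ¬ Sat Fs β → False := by
      intro α β hadj hαU hβV hαF hβF
      have hSα : S α := by
        by_cases hαM : Sat M₀ α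
        · obtain ⟨eα, heα, hαe⟩ := hαM
          by_cases h1 : eα = s(a,p)
          · subst h1
            rcases Sym2.mem_iff.1 hαe with rfl | rfl
            · exact absurd hαU (Finset.disjoint_right.1 hdisj haV)
            · exact hpS
          · by_cases h2 : eα = s(b,v')
            · subst h2
              rcases Sym2.mem_iff.1 hαe with rfl | rfl
              · exact absurd hbSatF hαF
              · exact absurd hαU (Finset.disjoint_right.1 hdisj hv'V)
            · have : eα ∈ base := Finset.mem_erase.2 ⟨h2, Finset.mem_erase.2 ⟨h1, heα⟩⟩
              exact absurd ⟨eα, Finset.mem_insert_of_mem this, hαe⟩ hαF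
        · exact ⟨hαU, M₀, hM₀, rfl, hαM⟩
      have hβSat : Sat M₀ β := F1 β ⟨α, hSα, hadj⟩
      obtain ⟨eβ, heβ, hβe⟩ := hβSat
      by_cases h1 : eβ = s(a,p)
      · subst h1
        rcases Sym2.mem_iff.1 hβe with rfl | rfl
        · exact hβF haSatF
        · exact absurd hpS.1 (Finset.disjoint_right.1 hdisj hβV)
      · by_cases h2 : eβ = s(b,v')
        · subst h2
          rcases Sym2.mem_iff.1 hβe with rfl | rfl
          · exact absurd hβV (Finset.disjoint_left.1 hdisj hbU)
          · exact hv'T ⟨α, hSα, hadj⟩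
        · have : eβ ∈ base := Finset.mem_erase.2 ⟨h2, Finset.mem_erase.2 ⟨h1, heβ⟩⟩
          exact hβF ⟨eβ, Finset.mem_insert_of_mem this, hβe⟩
    have hFmax : IsMaximalMatching G Fs := by
      refine ⟨hFm, ?_⟩
      intro e he
      by_contra hno2
      push_neg at hno2
      obtain ⟨x, y, rfl⟩ := sym2_rep e
      have hxF : ¬ Sat Fs x := by
        rintro ⟨f, hf, hxf⟩
        exact hno2 f hf x (Sym2.mem_mk_left x y) hxf
      have hyF : ¬ Sat Fs y := by
        rintro ⟨f, hf, hyf⟩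
        exact hno2 f hf y (Sym2.mem_mk_right x y) hyf
      have hadjxy : G.Adj x y := G.mem_edgeSet.1 he
      rcases hbip x y hadjxy with ⟨hxU, hyV⟩ | ⟨hxV, hyU⟩
      · exact key2 x y hadjxy hxU hyV hxF hyF
      · exact key2 y x hadjxy.symm hyU hxV hyF hxF
    have hcon := hEQ M₀ Fs hM₀max hFmax
    rw [hFscard] at hcon
    omega
  · -- easy direction
    intro hsat M₁ M₂ h1 h2
    have key : ∀ Mm : Finset (Sym2 W), IsMaximalMatching G Mm → Mm.card = U.card := by
      intro Mm hMm
      refine (Finset.card_bij (fun u hu => (hsat Mm hMm u hu).choose) ?_ ?_ ?_).symm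
      · intro u hu
        exact (hsat Mm hMm u hu).choose_spec.1
      · intro u1 hu1 u2 hu2 heq
        have hs1 := (hsat Mm hMm u1 hu1).choose_spec
        have hs2 := (hsat Mm hMm u2 hu2).choose_spec
        have heq' : (hsat Mm hMm u1 hu1).choose = (hsat Mm hMm u2 hu2).choose := heq
        have h22 : u2 ∈ (hsat Mm hMm u1 hu1).choose := by rw [heq']; exact hs2.2
        exact twoU hdisj hbip (hMm.1.1 hs1.1) hs1.2 h22 hu1 hu2
      · intro e he
        obtain ⟨u, huU, hue⟩ := edge_hasU hbip (hMm.1.1 he)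
        refine ⟨u, huU, ?_⟩
        have hs := (hsat Mm hMm u huU).choose_spec
        exact edge_unique hMm.1 hs.1 he hs.2 hue
    rw [key M₁ h1, key M₂ h2]
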